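/- The doubled-up subalgebra P is a subcoalgebra of the mod-2 dual Steenrod algebra: for every p ∈ P, the element ψ(p) ∈ A ⊗[F2] A lies in the image of the canonical map P ⊗[F2] P → A ⊗[F2] A. In particular, ψ(ξ_n^2) = Σ_{i=0}^{n} ξ_{n−i}^{2^{i+1}} ⊗ ξ_i^2 for every n ≥ 1. -/

import Mathlib

open scoped TensorProduct

noncomputable section

abbrev F2 := ZMod 2

/-- The mod-2 dual Steenrod algebra as a polynomial algebra on ξ₁, ξ₂, …. -/
abbrev A := MvPolynomial {n : ℕ // 1 ≤ n} F2

/-- The generators ξₙ, with the convention ξ₀ = 1. -/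
def xi : ℕ → A
  | 0 => 1
  | n + 1 => MvPolynomial.X ⟨n + 1, by omega⟩

/-- The Milnor diagonal ψ(ξₙ) = Σ_{i=0}^{n} ξ_{n−i}^{2^i} ⊗ ξᵢ. -/
def ψ : A →ₐ[F2] A ⊗[F2] A :=
  MvPolynomial.aeval fun v =>
    ∑ i ∈ Finset.range (v.1 + 1), ((xi (v.1 - i)) ^ (2 ^ i)) ⊗ₜ[F2] xi i

/-- The doubled-up subalgebra P generated by the ξₙ². -/
def P : Subalgebra F2 A := Algebra.adjoin F2 {x : A | ∃ n, 1 ≤ n ∧ x = xi n ^ 2}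

instance : Nontrivial (A ⊗[F2] A) := by
  refine nontrivial_of_ne 1 0 fun h => ?_
  have := congrArg (Algebra.TensorProduct.lmul' F2 (S := A)) h
  simp at this

instance : CharP (A ⊗[F2] A) 2 := charP_of_injective_algebraMap' F2 2

lemma psi_xi (n : ℕ) (hn : 1 ≤ n) :
    ψ (xi n) = ∑ i ∈ Finset.range (n + 1), ((xi (n - i)) ^ (2 ^ i)) ⊗ₜ[F2] xi i := by
  match n with
  | 0 => omega
  | m + 1 =>
    show ψ (MvPolynomial.X _) = _
    rw [ψ, MvPolynomial.aeval_X]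

lemma psi_xi_sq (n : ℕ) (hn : 1 ≤ n) :
    ψ (xi n ^ 2) =
      ∑ i ∈ Finset.range (n + 1), ((xi (n - i)) ^ (2 ^ (i + 1))) ⊗ₜ[F2] (xi i ^ 2) := by
  rw [map_pow, psi_xi n hn, sum_pow_char]
  refine Finset.sum_congr rfl fun i _ => ?_
  rw [Algebra.TensorProduct.tmul_pow, ← pow_mul, ← pow_succ]

lemma gen_mem (m : ℕ) (hm : 1 ≤ m) : xi m ^ 2 ∈ P :=
  Algebra.subset_adjoin ⟨m, hm, rfl⟩

/-- P is a subcoalgebra: ψ(p) lies in the image of P ⊗ P → A ⊗ A for every p ∈ P;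
in particular ψ(ξₙ²) = Σ_{i=0}^{n} ξ_{n−i}^{2^{i+1}} ⊗ ξᵢ² for n ≥ 1. -/
theorem P_subcoalgebra :
    (∀ p ∈ P, ψ p ∈
      Submodule.span F2 {z : A ⊗[F2] A | ∃ a ∈ P, ∃ b ∈ P, z = a ⊗ₜ[F2] b}) ∧
    (∀ n, 1 ≤ n → ψ (xi n ^ 2) =
      ∑ i ∈ Finset.range (n + 1), ((xi (n - i)) ^ (2 ^ (i + 1))) ⊗ₜ[F2] (xi i ^ 2)) := by
  set S : Set (A ⊗[F2] A) := {z : A ⊗[F2] A | ∃ a ∈ P, ∃ b ∈ P, z = a ⊗ₜ[F2] b}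
  have hmul : ∀ x ∈ Submodule.span F2 S, ∀ y ∈ Submodule.span F2 S,
      x * y ∈ Submodule.span F2 S := by
    intro x hx y hy
    have h : Submodule.span F2 S * Submodule.span F2 S ≤ Submodule.span F2 S := by
      rw [Submodule.span_mul_span]
      refine Submodule.span_le.2 ?_
      rintro z hz
      obtain ⟨z1, hz1, z2, hz2, rfl⟩ := Set.mem_mul.1 hz
      obtain ⟨a, ha, b, hb, rfl⟩ := hz1
      obtain ⟨c, hc, d, hd, rfl⟩ := hz2
      rw [Algebra.TensorProduct.tmul_mul_tmul]
      exact Submodule.subset_span ⟨a * c, mul_mem ha hc, b * d, mul_mem hb hd, rfl⟩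
    exact h (Submodule.mul_mem_mul hx hy)
  have hone : (1 : A ⊗[F2] A) ∈ Submodule.span F2 S :=
    Submodule.subset_span ⟨1, one_mem P, 1, one_mem P, rfl⟩
  refine ⟨?_, fun n hn => psi_xi_sq n hn⟩
  intro p hp
  refine Algebra.adjoin_induction (p := fun x _ => ψ x ∈ Submodule.span F2 S)
    ?_ ?_ ?_ ?_ hp
  · rintro x ⟨n, hn, rfl⟩ 
    rw [psi_xi_sq n hn]
    refine Submodule.sum_mem _ fun i hi => ?_
    refine Submodule.subset_span ?_
    refine ⟨xi (n - i) ^ 2 ^ (i + 1), ?_, xi i ^ 2, ?_, rfl⟩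
    · rcases Nat.lt_or_ge i n with h | h
      · have h1 : 1 ≤ n - i := by omega
        have : xi (n - i) ^ 2 ^ (i + 1) = (xi (n - i) ^ 2) ^ 2 ^ i := by
          rw [← pow_mul, pow_succ, mul_comm]
        rw [this]
        exact pow_mem (gen_mem _ h1) _
      · have hi' : i = n := by
          simp only [Finset.mem_range] at hi; omega
        subst hi'
        simp [Nat.sub_self, xi, one_pow]
    · rcases Nat.eq_zero_or_pos i with rfl | h
      · simp [xi]
      · exact gen_mem _ h
  · intro r
    rw [AlgHom.commutes]
    have : (algebraMap F2 (A ⊗[F2] A)) r = r • (1 : A ⊗[F2] A) := by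
      rw [Algebra.algebraMap_eq_smul_one]
    rw [this]
    exact Submodule.smul_mem _ _ hone
  · intro x y _ _ hx hy
    rw [map_add]; exact Submodule.add_mem _ hx hy
  · intro x y _ _ hx hy
    rw [map_mul]; exact hmul _ hx _ hy
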